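/- Let Φ : [0,∞) → [0,∞) be a Young function with right derivative φ, and suppose there exist q ∈ (1,∞) and c ∈ [0,∞) such that Φ(λ) ≤ (1/q)·λ·φ(λ) + c for all λ ≥ 0; let q' = q/(q−1). Let (f_k)_{k≥0} be a nonnegative submartingale on a filtered probability space (Ω, 𝒜, (ℱ_k)_{k≥0}, P). Then for every n ≥ 0, the Luxemburg norms satisfy ‖max_{k ≤ n} f_k‖_Φ ≤ q'·(1 + c)·‖f_n‖_Φ. -/

import Mathlib

open MeasureTheory ENNReal Set Filter

section aux
variable {Φ φ : ℝ → ℝ} {q c : ℝ}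

lemma phi_le_slope (hconv : ConvexOn ℝ (Set.Ici (0:ℝ)) Φ)
    (hφ : ∀ x ≥ (0:ℝ), HasDerivWithinAt Φ (φ x) (Set.Ici x) x)
    {x y : ℝ} (hx : 0 ≤ x) (hxy : x < y) :
    φ x ≤ (Φ y - Φ x) / (y - x) := by
  have h := (hφ x hx)
  rw [hasDerivWithinAt_iff_tendsto_slope, Set.Ici_sdiff_left] at h
  refine le_of_tendsto h ?_
  filter_upwards [Ioc_mem_nhdsGT hxy] with t ht
  rw [slope_def_field]
  have := hconv.secant_mono (a := x) (x := t) (y := y) hx (hx.trans ht.1.le)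
    (hx.trans hxy.le) ht.1.ne' hxy.ne' ht.2
  exact this

lemma slope_le_phi (hconv : ConvexOn ℝ (Set.Ici (0:ℝ)) Φ)
    (hφ : ∀ x ≥ (0:ℝ), HasDerivWithinAt Φ (φ x) (Set.Ici x) x)
    {x y : ℝ} (hx : 0 ≤ x) (hxy : x < y) :
    (Φ y - Φ x) / (y - x) ≤ φ y := by
  have h := (hφ y (hx.trans hxy.le))
  rw [hasDerivWithinAt_iff_tendsto_slope, Set.Ici_sdiff_left] at h
  refine ge_of_tendsto h ?_
  refine eventually_nhdsWithin_of_forall (fun t ht => ?_)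
  rw [slope_def_field]
  exact hconv.slope_mono_adjacent hx (hx.trans (hxy.trans ht).le) hxy ht

lemma phi_nonneg (hmono : MonotoneOn Φ (Set.Ici (0:ℝ)))
    (hφ : ∀ x ≥ (0:ℝ), HasDerivWithinAt Φ (φ x) (Set.Ici x) x)
    {x : ℝ} (hx : 0 ≤ x) : 0 ≤ φ x := by
  have h := (hφ x hx)
  rw [hasDerivWithinAt_iff_tendsto_slope, Set.Ici_sdiff_left] at h
  refine ge_of_tendsto h ?_
  refine eventually_nhdsWithin_of_forall (fun t ht => ?_)
  rw [slope_def_field]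
  have h1 : Φ x ≤ Φ t := hmono hx (hx.trans (le_of_lt ht)) (le_of_lt ht)
  have h2 : (0:ℝ) < t - x := by simp [mem_Ioi] at ht; linarith
  exact div_nonneg (by linarith) h2.le

lemma phi_mono (hconv : ConvexOn ℝ (Set.Ici (0:ℝ)) Φ)
    (hφ : ∀ x ≥ (0:ℝ), HasDerivWithinAt Φ (φ x) (Set.Ici x) x) :
    MonotoneOn φ (Set.Ici (0:ℝ)) := by
  intro x hx y hy hxy
  rcases eq_or_lt_of_le hxy with rfl | h
  · exact le_rfl
  · exact (phi_le_slope hconv hφ hx h).trans (slope_le_phi hconv hφ hx h)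

lemma Phi_nonneg (hmono : MonotoneOn Φ (Set.Ici (0:ℝ))) (h0 : Φ 0 = 0)
    {x : ℝ} (hx : 0 ≤ x) : 0 ≤ Φ x := by
  have := hmono (self_mem_Ici) hx hx
  simpa [h0] using this

lemma Phi_cont (hconv : ConvexOn ℝ (Set.Ici (0:ℝ)) Φ)
    (hφ : ∀ x ≥ (0:ℝ), HasDerivWithinAt Φ (φ x) (Set.Ici x) x) :
    ContinuousOn Φ (Set.Ici (0:ℝ)) := by
  intro x hx
  rcases eq_or_lt_of_le (Set.mem_Ici.1 hx : (0:ℝ) ≤ x) with rfl | h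
  · exact (hφ 0 le_rfl).continuousWithinAt
  · have h2 : ContinuousOn Φ (interior (Set.Ici (0:ℝ))) := hconv.continuousOn_interior
    rw [interior_Ici] at h2
    exact ((h2.continuousAt (Ioi_mem_nhds h)).continuousWithinAt)

end aux

noncomputable def theta (Φ φ : ℝ → ℝ) (c : ℝ) (x : ℝ) : ℝ :=
  if Φ (max x 0) < c then 0 else φ (max x 0)

noncomputable def Theta (Φ : ℝ → ℝ) (c : ℝ) (x : ℝ) : ℝ := max (Φ (max x 0) - c) 0

section aux2
variable {Φ φ : ℝ → ℝ} {q c : ℝ}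

lemma Theta_nonneg (x : ℝ) : 0 ≤ Theta Φ c x := le_max_right _ _

lemma Theta_mono (hmono : MonotoneOn Φ (Set.Ici (0:ℝ))) : Monotone (Theta Φ c) := by
  intro x y hxy
  have h1 : max x 0 ≤ max y 0 := max_le_max hxy le_rfl
  refine max_le_max ?_ le_rfl
  have := hmono (le_max_right x 0) (le_max_right y 0) h1
  linarith

lemma theta_nonneg (hmono : MonotoneOn Φ (Set.Ici (0:ℝ)))
    (hφ : ∀ x ≥ (0:ℝ), HasDerivWithinAt Φ (φ x) (Set.Ici x) x) (x : ℝ) :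
    0 ≤ theta Φ φ c x := by
  unfold theta
  split
  · exact le_rfl
  · exact phi_nonneg hmono hφ (le_max_right x 0)

lemma theta_mono (hconv : ConvexOn ℝ (Set.Ici (0:ℝ)) Φ)
    (hmono : MonotoneOn Φ (Set.Ici (0:ℝ)))
    (hφ : ∀ x ≥ (0:ℝ), HasDerivWithinAt Φ (φ x) (Set.Ici x) x) :
    Monotone (theta Φ φ c) := by
  intro x y hxy
  have h1 : max x 0 ≤ max y 0 := max_le_max hxy le_rfl
  unfold theta
  split
  · split
    · exact le_rfl
    · exact phi_nonneg hmono hφ (le_max_right y 0)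
  · rename_i hx
    have hy : ¬ Φ (max y 0) < c := fun hy =>
      hx (lt_of_le_of_lt (hmono (le_max_right x 0) (le_max_right y 0) h1) hy)
    rw [if_neg hy]
    exact phi_mono hconv hφ (le_max_right x 0) (le_max_right y 0) h1

lemma Theta_eq {x : ℝ} (hx : 0 ≤ x) : Theta Φ c x = max (Φ x - c) 0 := by
  unfold Theta; rw [max_eq_left hx]

lemma theta_eq {x : ℝ} (hx : 0 ≤ x) :
    theta Φ φ c x = if Φ x < c then 0 else φ x := by
  unfold theta; rw [max_eq_left hx]

lemma Theta_hasDeriv (hmono : MonotoneOn Φ (Set.Ici (0:ℝ)))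
    (hφ : ∀ x ≥ (0:ℝ), HasDerivWithinAt Φ (φ x) (Set.Ici x) x)
    {x : ℝ} (hx : 0 ≤ x) :
    HasDerivWithinAt (Theta Φ c) (theta Φ φ c x) (Set.Ici x) x := by
  rw [theta_eq hx]
  split
  · rename_i hlt
    -- Theta vanishes near x within Ici x
    have hev : ∀ᶠ t in nhdsWithin x (Set.Ici x), Theta Φ c t = 0 := by
      have hcont : ContinuousWithinAt Φ (Set.Ici x) x := (hφ x hx).continuousWithinAt
      have h1 : ∀ᶠ t in nhdsWithin x (Set.Ici x), Φ t < c :=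
        hcont.eventually_lt continuousWithinAt_const hlt
      have h2 : ∀ᶠ t in nhdsWithin x (Set.Ici x), t ∈ Set.Ici x :=
        eventually_mem_nhdsWithin
      filter_upwards [h1, h2] with t h1t h2t
      have ht0 : 0 ≤ t := hx.trans h2t
      rw [Theta_eq ht0, max_eq_right (by linarith)]
    have hx0 : Theta Φ c x = 0 := by
      rw [Theta_eq hx, max_eq_right (by linarith)]
    exact (hasDerivWithinAt_const x _ 0).congr_of_eventuallyEq hev hx0
  · rename_i hge
    push_neg at hge
    have heq : ∀ t ∈ Set.Ici x, Theta Φ c t = Φ t - c := by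
      intro t ht
      have ht0 : 0 ≤ t := hx.trans ht
      have : c ≤ Φ t := hge.trans (hmono hx ht0 ht)
      rw [Theta_eq ht0, max_eq_left (by linarith)]
    exact ((hφ x hx).sub_const c).congr heq (heq x Set.self_mem_Ici)

lemma Theta_le (hq : 1 < q) (hc : 0 ≤ c)
    (hmono : MonotoneOn Φ (Set.Ici (0:ℝ))) (h0 : Φ 0 = 0)
    (hφ : ∀ x ≥ (0:ℝ), HasDerivWithinAt Φ (φ x) (Set.Ici x) x)
    (hqc : ∀ lam ≥ (0:ℝ), Φ lam ≤ (1 / q) * lam * φ lam + c)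
    {s : ℝ} (hs : 0 ≤ s) : Theta Φ c s ≤ (1 / q) * s * theta Φ φ c s := by
  rw [Theta_eq hs, theta_eq hs]
  split
  · rename_i hlt
    rw [max_eq_right (by linarith)]
    simp
  · rename_i hge
    push_neg at hge
    have := hqc s hs
    have h2 : Φ s - c ≤ (1/q) * s * φ s := by linarith
    refine max_le h2 ?_
    have hφs : 0 ≤ φ s := phi_nonneg hmono hφ hs
    have hq0 : (0:ℝ) ≤ 1/q := by positivity
    positivity

lemma Theta_contOn (hconv : ConvexOn ℝ (Set.Ici (0:ℝ)) Φ)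
    (hφ : ∀ x ≥ (0:ℝ), HasDerivWithinAt Φ (φ x) (Set.Ici x) x) :
    ContinuousOn (Theta Φ c) (Set.Ici (0:ℝ)) := by
  have h1 : ContinuousOn (fun x : ℝ => Φ (max x 0)) (Set.Ici (0:ℝ)) := by
    refine (Phi_cont hconv hφ).comp (continuous_id.max continuous_const).continuousOn ?_
    intro x _
    exact le_max_right x 0
  exact (continuous_id.max continuous_const).comp_continuousOn (h1.sub continuousOn_const)

end aux2

section aux3
variable {Φ φ : ℝ → ℝ} {q c : ℝ}
variable (hconv : ConvexOn ℝ (Set.Ici (0:ℝ)) Φ)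
  (hmono : MonotoneOn Φ (Set.Ici (0:ℝ))) (h0 : Φ 0 = 0)
  (hφ : ∀ x ≥ (0:ℝ), HasDerivWithinAt Φ (φ x) (Set.Ici x) x)
  (hq : 1 < q) (hc : 0 ≤ c)
  (hqc : ∀ lam ≥ (0:ℝ), Φ lam ≤ (1 / q) * lam * φ lam + c)

include hconv hmono hφ in
lemma theta_intervalIntegrable (x y : ℝ) :
    IntervalIntegrable (theta Φ φ c) volume x y :=
  ((theta_mono hconv hmono hφ).monotoneOn _).intervalIntegrable

include hconv hmono hφ in
lemma theta_div_intervalIntegrable {x y : ℝ} (hx : 0 < x) (hxy : x ≤ y) :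
    IntervalIntegrable (fun t => theta Φ φ c t / t) volume x y := by
  rw [intervalIntegrable_iff_integrableOn_Icc_of_le hxy]
  have hmeas : Measurable (theta Φ φ c) := (theta_mono hconv hmono hφ).measurable
  refine Measure.integrableOn_of_bounded (M := theta Φ φ c y / x) (by simp)
    ((hmeas.div measurable_id).aestronglyMeasurable) ?_
  refine (ae_restrict_iff' measurableSet_Icc).2 (ae_of_all _ (fun t ht => ?_))
  have ht1 : 0 < t := hx.trans_le ht.1
  have h1 : 0 ≤ theta Φ φ c t := theta_nonneg hmono hφ t
  have h2 : theta Φ φ c t ≤ theta Φ φ c y := theta_mono hconv hmono hφ ht.2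
  rw [Real.norm_eq_abs, abs_of_nonneg (by positivity)]
  calc theta Φ φ c t / t ≤ theta Φ φ c y / t := by gcongr
    _ ≤ theta Φ φ c y / x := by
        have h3 : 0 ≤ theta Φ φ c y := h1.trans h2
        gcongr
        exact ht.1

include hconv hmono hφ in
lemma Theta_FTC {x y : ℝ} (hx : 0 ≤ x) (hxy : x ≤ y) :
    ∫ t in x..y, theta Φ φ c t = Theta Φ c y - Theta Φ c x := by
  refine intervalIntegral.integral_eq_sub_of_hasDeriv_right_of_le hxy
    ((Theta_contOn hconv hφ).mono ?_) (fun t ht => ?_) (theta_intervalIntegrable hconv hmono hφ x y)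
  · exact fun t ht => hx.trans ht.1
  · exact (Theta_hasDeriv hmono hφ (hx.trans ht.1.le)).mono Set.Ioi_subset_Ici_self

end aux3

section aux4
variable {Φ φ : ℝ → ℝ} {q c : ℝ}
variable (hconv : ConvexOn ℝ (Set.Ici (0:ℝ)) Φ)
  (hmono : MonotoneOn Φ (Set.Ici (0:ℝ))) (h0 : Φ 0 = 0)
  (hφ : ∀ x ≥ (0:ℝ), HasDerivWithinAt Φ (φ x) (Set.Ici x) x)
  (hq : 1 < q) (hc : 0 ≤ c)
  (hqc : ∀ lam ≥ (0:ℝ), Φ lam ≤ (1 / q) * lam * φ lam + c)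

include hconv hmono h0 hφ hq hc hqc

lemma key3 {ε y : ℝ} (hε : 0 < ε) (hεy : ε ≤ y) :
    ∫ t in ε..y, theta Φ φ c t / t ≤ (q / (q - 1)) * (Theta Φ c y / y) := by
  have hq0 : (0:ℝ) < q := by linarith
  have hy : 0 < y := hε.trans_le hεy
  set u : ℝ → ℝ := fun s => Theta Φ c s * s⁻¹ with hu
  have hucont : ContinuousOn u (Set.Icc ε y) := by
    refine ((Theta_contOn hconv hφ).mono (fun t ht => (hε.trans_le ht.1).le)).mul
      (continuousOn_inv₀.mono ?_)
    intro t ht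
    exact (hε.trans_le ht.1).ne'
  have huderiv : ∀ s ∈ Set.Ioo ε y, HasDerivWithinAt u
      (theta Φ φ c s * s⁻¹ + Theta Φ c s * (-(s^2)⁻¹)) (Set.Ioi s) s := by
    intro s hs
    have hs0 : 0 < s := hε.trans hs.1
    exact (((Theta_hasDeriv hmono hφ hs0.le).mono Set.Ioi_subset_Ici_self).mul
      (((hasDerivAt_inv hs0.ne').hasDerivWithinAt)))
  have hptwise : ∀ s ∈ Set.Ioo ε y, (1 - 1/q) * (theta Φ φ c s / s) ≤
      theta Φ φ c s * s⁻¹ + Theta Φ c s * (-(s^2)⁻¹) := by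
    intro s hs
    have hs0 : 0 < s := hε.trans hs.1
    have h1 : Theta Φ c s ≤ (1/q) * s * theta Φ φ c s := Theta_le hq hc hmono h0 hφ hqc hs0.le
    have h2 : Theta Φ c s * (s^2)⁻¹ ≤ (1/q) * (theta Φ φ c s / s) := by
      rw [div_eq_mul_inv]
      calc Theta Φ c s * (s^2)⁻¹ ≤ ((1/q) * s * theta Φ φ c s) * (s^2)⁻¹ :=
              mul_le_mul_of_nonneg_right h1 (by positivity)
        _ = (1/q) * (theta Φ φ c s * s⁻¹) := by
              field_simp
    have : theta Φ φ c s * s⁻¹ = theta Φ φ c s / s := (div_eq_mul_inv _ _).symm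
    linarith
  have hint : IntegrableOn (fun s => (1 - 1/q) * (theta Φ φ c s / s)) (Set.Icc ε y) := by
    have := theta_div_intervalIntegrable (c := c) hconv hmono hφ hε hεy
    rw [intervalIntegrable_iff_integrableOn_Icc_of_le hεy] at this
    exact this.const_mul _
  have hmain : (∫ s in ε..y, (1 - 1/q) * (theta Φ φ c s / s)) ≤ u y - u ε :=
    intervalIntegral.integral_le_sub_of_hasDeriv_right_of_le hεy hucont huderiv hint hptwise
  have huε : 0 ≤ u ε := mul_nonneg (Theta_nonneg ε) (by positivity)
  have huy : u y = Theta Φ c y / y := by rw [hu]; simp [div_eq_mul_inv]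
  rw [intervalIntegral.integral_const_mul] at hmain
  have hcoef : (0:ℝ) < 1 - 1/q := by
    rw [sub_pos, div_lt_one hq0]; exact hq
  have h5 : (1 - 1/q) * ∫ s in ε..y, theta Φ φ c s / s ≤ Theta Φ c y / y := by
    rw [← huy]; linarith
  have h6 : (1 - 1/q)⁻¹ = q / (q-1) := by field_simp
  calc (∫ s in ε..y, theta Φ φ c s / s)
      = (1 - 1/q)⁻¹ * ((1 - 1/q) * ∫ s in ε..y, theta Φ φ c s / s) := by
        rw [← mul_assoc, inv_mul_cancel₀ hcoef.ne', one_mul]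
    _ ≤ (1 - 1/q)⁻¹ * (Theta Φ c y / y) := by
        have : (0:ℝ) ≤ (1 - 1/q)⁻¹ := by positivity
        exact mul_le_mul_of_nonneg_left h5 this
    _ = (q / (q-1)) * (Theta Φ c y / y) := by rw [h6]

lemma keyD {a b ε : ℝ} (ha : 0 ≤ a) (hε : 0 < ε) (hεb : ε ≤ b) :
    a * ∫ t in ε..b, theta Φ φ c t / t ≤
      (q / (q - 1) - 1) * Theta Φ c a + Theta Φ c b := by
  have hq1 : (0:ℝ) < q - 1 := by linarith
  have hq' : 1 ≤ q / (q-1) := by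
    rw [le_div_iff₀ hq1]; linarith
  have hb : 0 < b := hε.trans_le hεb
  have hTha : 0 ≤ Theta Φ c a := Theta_nonneg a
  have hmono_int : ∀ x y : ℝ, 0 < x → x ≤ y → a ≤ x →
      a * ∫ t in x..y, theta Φ φ c t / t ≤ Theta Φ c y - Theta Φ c x := by
    intro x y hx hxy hax
    rw [← intervalIntegral.integral_const_mul, ← Theta_FTC hconv hmono hφ hx.le hxy]
    refine intervalIntegral.integral_mono_on hxy
      ((theta_div_intervalIntegrable (c := c) hconv hmono hφ hx hxy).const_mul a)
      (theta_intervalIntegrable hconv hmono hφ x y) (fun t ht => ?_)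
    have ht0 : 0 < t := hx.trans_le ht.1
    have hth : 0 ≤ theta Φ φ c t := theta_nonneg hmono hφ t
    calc a * (theta Φ φ c t / t) = (a / t) * theta Φ φ c t := by ring
      _ ≤ 1 * theta Φ φ c t := by
          refine mul_le_mul_of_nonneg_right ?_ hth
          rw [div_le_one ht0]
          exact hax.trans ht.1
      _ = theta Φ φ c t := one_mul _
  rcases le_or_gt a ε with haε | hεa
  · -- a ≤ ε : easy case
    have h1 : a * ∫ t in ε..b, theta Φ φ c t / t ≤ Theta Φ c b - Theta Φ c ε :=
      hmono_int ε b hε hεb haε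
    have h2 : 0 ≤ Theta Φ c ε := Theta_nonneg ε
    nlinarith
  · rcases le_or_gt b a with hba | hab
    · -- ε < a, b ≤ a
      have ha0 : 0 < a := hε.trans hεa
      have hsplit : (∫ t in ε..b, theta Φ φ c t / t) + (∫ t in b..a, theta Φ φ c t / t)
          = ∫ t in ε..a, theta Φ φ c t / t :=
        intervalIntegral.integral_add_adjacent_intervals
          (theta_div_intervalIntegrable (c := c) hconv hmono hφ hε hεb)
          (theta_div_intervalIntegrable (c := c) hconv hmono hφ hb hba)
      have h3 : a * ∫ t in ε..a, theta Φ φ c t / t ≤ (q/(q-1)) * Theta Φ c a := by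
        have := key3 hconv hmono h0 hφ hq hc hqc hε (hεb.trans hba)
        calc a * ∫ t in ε..a, theta Φ φ c t / t ≤ a * ((q/(q-1)) * (Theta Φ c a / a)) :=
              mul_le_mul_of_nonneg_left this ha0.le
          _ = (q/(q-1)) * Theta Φ c a := by
              field_simp
      have h4 : Theta Φ c a - Theta Φ c b ≤ a * ∫ t in b..a, theta Φ φ c t / t := by
        have hle : (∫ t in b..a, theta Φ φ c t) = Theta Φ c a - Theta Φ c b :=
          Theta_FTC hconv hmono hφ hb.le hba
        rw [← hle, ← intervalIntegral.integral_const_mul]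
        refine intervalIntegral.integral_mono_on hba
          (theta_intervalIntegrable hconv hmono hφ b a)
          ((theta_div_intervalIntegrable (c := c) hconv hmono hφ hb hba).const_mul a)
          (fun t ht => ?_)
        have ht0 : 0 < t := hb.trans_le ht.1
        have hth : 0 ≤ theta Φ φ c t := theta_nonneg hmono hφ t
        calc theta Φ φ c t = 1 * theta Φ φ c t := (one_mul _).symm
          _ ≤ (a / t) * theta Φ φ c t := by
              refine mul_le_mul_of_nonneg_right ?_ hth
              rw [le_div_iff₀ ht0, one_mul]
              exact ht.2
          _ = a * (theta Φ φ c t / t) := by ring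
      have : a * ∫ t in ε..b, theta Φ φ c t / t
          = a * (∫ t in ε..a, theta Φ φ c t / t) - a * ∫ t in b..a, theta Φ φ c t / t := by
        rw [← hsplit]; ring
      rw [this]
      linarith
    · -- ε < a < b
      have ha0 : 0 < a := hε.trans hεa
      have hsplit : (∫ t in ε..a, theta Φ φ c t / t) + (∫ t in a..b, theta Φ φ c t / t)
          = ∫ t in ε..b, theta Φ φ c t / t :=
        intervalIntegral.integral_add_adjacent_intervals
          (theta_div_intervalIntegrable (c := c) hconv hmono hφ hε hεa.le)
          (theta_div_intervalIntegrable (c := c) hconv hmono hφ ha0 hab.le)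
      have h3 : a * ∫ t in ε..a, theta Φ φ c t / t ≤ (q/(q-1)) * Theta Φ c a := by
        have := key3 hconv hmono h0 hφ hq hc hqc hε hεa.le
        calc a * ∫ t in ε..a, theta Φ φ c t / t ≤ a * ((q/(q-1)) * (Theta Φ c a / a)) :=
              mul_le_mul_of_nonneg_left this ha0.le
          _ = (q/(q-1)) * Theta Φ c a := by
              field_simp
      have h4 : a * ∫ t in a..b, theta Φ φ c t / t ≤ Theta Φ c b - Theta Φ c a :=
        hmono_int a b ha0 hab.le le_rfl
      have : a * ∫ t in ε..b, theta Φ φ c t / t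
          = a * (∫ t in ε..a, theta Φ φ c t / t) + a * ∫ t in a..b, theta Φ φ c t / t := by
        rw [← hsplit]; ring
      rw [this]
      linarith

end aux4

section aux5
variable {Φ φ : ℝ → ℝ} {q c : ℝ}
variable (hconv : ConvexOn ℝ (Set.Ici (0:ℝ)) Φ)
  (hmono : MonotoneOn Φ (Set.Ici (0:ℝ))) (h0 : Φ 0 = 0)
  (hφ : ∀ x ≥ (0:ℝ), HasDerivWithinAt Φ (φ x) (Set.Ici x) x)
  (hq : 1 < q) (hc : 0 ≤ c)
  (hqc : ∀ lam ≥ (0:ℝ), Φ lam ≤ (1 / q) * lam * φ lam + c)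

include hconv hmono h0 hφ hq hc hqc

lemma kappa_measurable :
    Measurable (fun t : ℝ => ENNReal.ofReal (theta Φ φ c t / (q / (q-1) * t))) := by
  apply ENNReal.measurable_ofReal.comp
  exact ((theta_mono hconv hmono hφ).measurable).div (measurable_const.mul measurable_id)

lemma keyD_enn {a b : ℝ} (ha : 0 ≤ a) (hb : 0 ≤ b) :
    ENNReal.ofReal a * (∫⁻ t in Set.Ioc 0 b, ENNReal.ofReal (theta Φ φ c t / (q / (q-1) * t))) ≤
      ENNReal.ofReal ((1/q) * Theta Φ c a) + ENNReal.ofReal ((1 - 1/q) * Theta Φ c b) := by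
  have hq1 : (0:ℝ) < q - 1 := by linarith
  have hq'pos : (0:ℝ) < q / (q-1) := by positivity
  rcases eq_or_lt_of_le hb with rfl | hb0
  · simp
  set κ : ℝ → ℝ≥0∞ := fun t => ENNReal.ofReal (theta Φ φ c t / (q / (q-1) * t)) with hκ
  have hκm : Measurable κ := kappa_measurable hconv hmono h0 hφ hq hc hqc
  have hsup : (∫⁻ t in Set.Ioc 0 b, κ t) ≤
      ⨆ n : ℕ, ∫⁻ t in Set.Ioc (b / (n+1)) b, κ t := by
    have hptle : ∀ t : ℝ, (Set.Ioc (0:ℝ) b).indicator κ t ≤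
        ⨆ n : ℕ, (Set.Ioc (b / (n+1)) b).indicator κ t := by
      intro t
      by_cases ht : t ∈ Set.Ioc (0:ℝ) b
      · obtain ⟨n, hn⟩ := exists_nat_gt (b / t)
        have hlt : b / (n+1) < t := by
          rw [div_lt_iff₀ (by positivity)]
          rw [div_lt_iff₀ ht.1] at hn
          nlinarith [ht.1]
        rw [Set.indicator_of_mem ht]
        refine le_trans ?_ (le_iSup _ n)
        rw [Set.indicator_of_mem (Set.mem_Ioc.2 ⟨hlt, ht.2⟩)]
      · rw [Set.indicator_of_notMem ht]
        exact zero_le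
    have hmon : Monotone (fun n : ℕ => (Set.Ioc (b / (n+1)) b).indicator κ) := by
      intro m n hmn
      have h1 : ((m:ℝ)+1) ≤ ((n:ℝ)+1) := by exact_mod_cast Nat.succ_le_succ hmn
      have hb' : (0:ℝ) ≤ b := hb0.le
      have hd : b/((n:ℝ)+1) ≤ b/((m:ℝ)+1) := by gcongr
      exact Set.indicator_le_indicator_of_subset (Set.Ioc_subset_Ioc_left hd) (fun t => zero_le)
    calc (∫⁻ t in Set.Ioc 0 b, κ t) = ∫⁻ t, (Set.Ioc (0:ℝ) b).indicator κ t :=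
          (lintegral_indicator measurableSet_Ioc _).symm
      _ ≤ ∫⁻ t, ⨆ n : ℕ, (Set.Ioc (b / (n+1)) b).indicator κ t := lintegral_mono hptle
      _ = ⨆ n : ℕ, ∫⁻ t, (Set.Ioc (b / (n+1)) b).indicator κ t :=
          lintegral_iSup (fun n => hκm.indicator measurableSet_Ioc) hmon
      _ = ⨆ n : ℕ, ∫⁻ t in Set.Ioc (b / (n+1)) b, κ t := by
          simp [lintegral_indicator measurableSet_Ioc]
  have hbound : ∀ n : ℕ, ENNReal.ofReal a * (∫⁻ t in Set.Ioc (b / (n+1)) b, κ t) ≤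
      ENNReal.ofReal ((1/q) * Theta Φ c a) + ENNReal.ofReal ((1 - 1/q) * Theta Φ c b) := by
    intro n
    set ε : ℝ := b / (n+1) with hε
    have hε0 : 0 < ε := by positivity
    have hεb : ε ≤ b := by
      rw [hε, div_le_iff₀ (by positivity)]
      nlinarith [hb0]
    have hint : IntegrableOn (fun t => theta Φ φ c t / (q / (q-1) * t)) (Set.Ioc ε b) := by
      have h1 := theta_div_intervalIntegrable (c := c) hconv hmono hφ hε0 hεb
      rw [intervalIntegrable_iff_integrableOn_Icc_of_le hεb] at h1
      have h2 : IntegrableOn (fun t => theta Φ φ c t / t) (Set.Ioc ε b) :=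
        h1.mono_set Set.Ioc_subset_Icc_self
      have h3 := h2.div_const (q / (q-1))
      refine IntegrableOn.congr_fun h3 (fun t ht => ?_) measurableSet_Ioc
      exact (div_mul_eq_div_div_swap _ _ _).symm
    have heq1 : (∫⁻ t in Set.Ioc ε b, κ t) =
        ENNReal.ofReal (∫ t in Set.Ioc ε b, theta Φ φ c t / (q / (q-1) * t)) := by
      rw [ofReal_integral_eq_lintegral_ofReal hint]
      refine (ae_restrict_iff' measurableSet_Ioc).2 (ae_of_all _ (fun t ht => ?_))
      have h1 : 0 ≤ theta Φ φ c t := theta_nonneg hmono hφ t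
      have h2 : 0 < t := hε0.trans_le ht.1.le
      positivity
    have heq2 : (∫ t in Set.Ioc ε b, theta Φ φ c t / (q / (q-1) * t)) =
        (∫ t in ε..b, theta Φ φ c t / t) / (q / (q-1)) := by
      rw [← intervalIntegral.integral_div]
      rw [intervalIntegral.integral_of_le hεb]
      refine setIntegral_congr_fun measurableSet_Ioc (fun t ht => ?_)
      rw [div_mul_eq_div_div_swap]
    have hkey := keyD hconv hmono h0 hφ hq hc hqc ha hε0 hεb
    rw [heq1, heq2, ← ENNReal.ofReal_mul ha]
    refine le_trans (ENNReal.ofReal_le_ofReal ?_) (ENNReal.ofReal_add_le)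
    have halg : ((q/(q-1) - 1) * Theta Φ c a + Theta Φ c b) / (q/(q-1)) =
        (1/q) * Theta Φ c a + (1 - 1/q) * Theta Φ c b := by
      field_simp
      ring
    calc a * ((∫ t in ε..b, theta Φ φ c t / t) / (q/(q-1)))
        = (a * ∫ t in ε..b, theta Φ φ c t / t) / (q/(q-1)) := by ring
      _ ≤ ((q/(q-1) - 1) * Theta Φ c a + Theta Φ c b) / (q/(q-1)) := by
          exact (div_le_div_iff_of_pos_right hq'pos).2 hkey
      _ = (1/q) * Theta Φ c a + (1 - 1/q) * Theta Φ c b := halg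
  calc ENNReal.ofReal a * (∫⁻ t in Set.Ioc 0 b, κ t)
      ≤ ENNReal.ofReal a * ⨆ n : ℕ, ∫⁻ t in Set.Ioc (b / (n+1)) b, κ t := by
        exact mul_le_mul_right hsup _
    _ = ⨆ n : ℕ, ENNReal.ofReal a * ∫⁻ t in Set.Ioc (b / (n+1)) b, κ t := by
        rw [ENNReal.mul_iSup]
    _ ≤ ENNReal.ofReal ((1/q) * Theta Φ c a) + ENNReal.ofReal ((1 - 1/q) * Theta Φ c b) :=
        iSup_le hbound

end aux5

section core
variable {Ω : Type*} {m0 : MeasurableSpace Ω}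
variable {Φ φ : ℝ → ℝ} {q c : ℝ}

theorem core (P : Measure Ω) [IsProbabilityMeasure P] (ℱ : Filtration ℕ m0)
    (f : ℕ → Ω → ℝ) (hf : Submartingale f ℱ P) (hfpos : ∀ k ω, 0 ≤ f k ω)
    (hconv : ConvexOn ℝ (Set.Ici (0:ℝ)) Φ)
    (hmono : MonotoneOn Φ (Set.Ici (0:ℝ)))
    (h0 : Φ 0 = 0)
    (hφ : ∀ x ≥ (0:ℝ), HasDerivWithinAt Φ (φ x) (Set.Ici x) x)
    (hq : 1 < q) (hc : 0 ≤ c)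
    (hqc : ∀ lam ≥ (0:ℝ), Φ lam ≤ (1 / q) * lam * φ lam + c)
    (n : ℕ)
    (hone : ∫⁻ ω, ENNReal.ofReal (Φ (f n ω)) ∂P ≤ 1) :
    ∫⁻ ω, ENNReal.ofReal (Φ
      (((Finset.range (n + 1)).sup' Finset.nonempty_range_add_one fun k => f k ω)
        / (q / (q - 1) * (1 + c)))) ∂P ≤ 1 := by
  have hq1 : (0:ℝ) < q - 1 := by linarith
  have hq0 : (0:ℝ) < q := by linarith
  set q' : ℝ := q / (q - 1) with hq'def
  have hq'pos : (0:ℝ) < q' := by positivity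
  set fstar : Ω → ℝ := fun ω => (Finset.range (n + 1)).sup' Finset.nonempty_range_add_one
    fun k => f k ω with hfstar
  have hfstar_nonneg : ∀ ω, 0 ≤ fstar ω := fun ω =>
    (hfpos n ω).trans (Finset.le_sup' (fun k => f k ω) (Finset.self_mem_range_succ n))
  have hfmeas : ∀ k, Measurable (f k) :=
    fun k => (hf.stronglyMeasurable k).measurable.le (ℱ.le k)
  have hfstar_meas : Measurable fstar :=
    Finset.measurable_range_sup'' fun k _ => hfmeas k
  have hθmono : Monotone (theta Φ φ c) := theta_mono hconv hmono hφ
  have hθnn : ∀ t, 0 ≤ theta Φ φ c t := fun t => theta_nonneg hmono hφ t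
  have hΘmono : Monotone (Theta Φ c) := Theta_mono hmono
  have hΘ0 : Theta Φ c 0 = 0 := by
    rw [Theta_eq le_rfl, h0, max_eq_right (by linarith)]
  have hΘmeas : Measurable (Theta Φ c) := hΘmono.measurable
  -- Main truncated estimate
  have hMbound : ∀ M : ℕ,
      ∫⁻ ω, ENNReal.ofReal (Theta Φ c (min (fstar ω) M / q')) ∂P ≤ 1 := by
    intro M
    set B : Ω → ℝ := fun ω => min (fstar ω) M / q' with hB
    have hBmeas : Measurable B := (hfstar_meas.min measurable_const).div_const q'
    have hBnn : ∀ ω, 0 ≤ B ω := fun ω =>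
      div_nonneg (le_min (hfstar_nonneg ω) (Nat.cast_nonneg M)) hq'pos.le
    set S : Set (ℝ × Ω) := {p : ℝ × Ω | p.1 ≤ B p.2} with hSdef
    have hS : MeasurableSet S :=
      measurableSet_le measurable_fst (hBmeas.comp measurable_snd)
    set H : ℝ → Ω → ℝ≥0∞ := fun t ω =>
      ENNReal.ofReal (theta Φ φ c t / (q' * t)) *
        (ENNReal.ofReal (f n ω) * S.indicator 1 (t, ω)) with hHdef
    -- layer cake
    have hlayer : ∫⁻ ω, ENNReal.ofReal (Theta Φ c (B ω)) ∂P =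
        ∫⁻ t in Set.Ioi 0, P {ω | t ≤ B ω} * ENNReal.ofReal (theta Φ φ c t) := by
      have h1 := lintegral_comp_eq_lintegral_meas_le_mul P (f := B) (g := theta Φ φ c)
        (ae_of_all _ hBnn) hBmeas.aemeasurable
        (fun t _ => theta_intervalIntegrable hconv hmono hφ 0 t)
        (ae_of_all _ (fun t => hθnn t))
      rw [← h1]
      refine lintegral_congr (fun ω => ?_)
      rw [Theta_FTC hconv hmono hφ le_rfl (hBnn ω), hΘ0, sub_zero]
    -- Doob's maximal inequality, pointwise in t
    have hDoob : ∀ t ∈ Set.Ioi (0:ℝ),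
        P {ω | t ≤ B ω} * ENNReal.ofReal (theta Φ φ c t) ≤ ∫⁻ ω, H t ω ∂P := by
      intro t ht
      have ht0 : (0:ℝ) < t := ht
      have hs0 : (0:ℝ) < q' * t := by positivity
      by_cases hsM : q' * t ≤ (M:ℝ)
      · have hseteq : {ω | t ≤ B ω} = {ω | q' * t ≤ fstar ω} := by
          ext ω
          simp only [Set.mem_setOf_eq, hB, le_div_iff₀ hq'pos, le_min_iff]
          constructor
          · intro h
            linarith [h.1]
          · intro h
            constructor <;> linarith
        have hsetmeas : MeasurableSet {ω | q' * t ≤ fstar ω} :=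
          measurableSet_le measurable_const hfstar_meas
        have hmax : (q' * t).toNNReal • P {ω | q' * t ≤ fstar ω} ≤
            ENNReal.ofReal (∫ ω in {ω | q' * t ≤ fstar ω}, f n ω ∂P) := by
          have h2 := maximal_ineq hf hfpos (ε := (q' * t).toNNReal) n
          rwa [Real.coe_toNNReal _ hs0.le] at h2
        have hofs : ENNReal.ofReal (q' * t) ≠ 0 := by
          simp [ENNReal.ofReal_eq_zero, not_le, hs0]
        have hofs' : ENNReal.ofReal (q' * t) ≠ ⊤ := ENNReal.ofReal_ne_top
        have hmax2 : P {ω | q' * t ≤ fstar ω} ≤ (ENNReal.ofReal (q' * t))⁻¹ *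
            ENNReal.ofReal (∫ ω in {ω | q' * t ≤ fstar ω}, f n ω ∂P) := by
          have h3 : P {ω | q' * t ≤ fstar ω} = (ENNReal.ofReal (q' * t))⁻¹ *
              (ENNReal.ofReal (q' * t) * P {ω | q' * t ≤ fstar ω}) := by
            rw [← mul_assoc, ENNReal.inv_mul_cancel hofs hofs', one_mul]
          rw [h3]
          refine mul_le_mul_right ?_ _
          exact hmax
        have hlint : ENNReal.ofReal (∫ ω in {ω | q' * t ≤ fstar ω}, f n ω ∂P) =
            ∫⁻ ω in {ω | q' * t ≤ fstar ω}, ENNReal.ofReal (f n ω) ∂P :=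
          ofReal_integral_eq_lintegral_ofReal ((hf.integrable n).integrableOn)
            (ae_of_all _ (fun ω => hfpos n ω))
        have hindeq : ∀ ω, ({ω | q' * t ≤ fstar ω}).indicator
            (fun ω => ENNReal.ofReal (f n ω)) ω = ENNReal.ofReal (f n ω) * S.indicator 1 (t, ω) := by
          intro ω
          by_cases hmem : q' * t ≤ fstar ω
          · have hmem2 : (t, ω) ∈ S := by
              show t ≤ B ω
              rw [hB]
              simp only
              rw [le_div_iff₀ hq'pos, le_min_iff]
              constructor <;> linarith
            rw [Set.indicator_of_mem (show ω ∈ {ω | q' * t ≤ fstar ω} from hmem),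
              Set.indicator_of_mem hmem2]
            simp
          · have hmem2 : (t, ω) ∉ S := by
              intro hcon
              have h5 : t ≤ B ω := hcon
              rw [hB] at h5
              simp only at h5
              rw [le_div_iff₀ hq'pos, le_min_iff] at h5
              exact hmem (by linarith [h5.1])
            rw [Set.indicator_of_notMem (show ω ∉ {ω | q' * t ≤ fstar ω} from hmem),
              Set.indicator_of_notMem hmem2, mul_zero]
        calc P {ω | t ≤ B ω} * ENNReal.ofReal (theta Φ φ c t)
            = ENNReal.ofReal (theta Φ φ c t) * P {ω | q' * t ≤ fstar ω} := by
              rw [hseteq, mul_comm]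
          _ ≤ ENNReal.ofReal (theta Φ φ c t) * ((ENNReal.ofReal (q' * t))⁻¹ *
              ENNReal.ofReal (∫ ω in {ω | q' * t ≤ fstar ω}, f n ω ∂P)) :=
              mul_le_mul_right hmax2 _
          _ = ENNReal.ofReal (theta Φ φ c t / (q' * t)) *
              ∫⁻ ω in {ω | q' * t ≤ fstar ω}, ENNReal.ofReal (f n ω) ∂P := by
              rw [hlint, ENNReal.ofReal_div_of_pos hs0, div_eq_mul_inv, mul_assoc]
          _ = ∫⁻ ω, H t ω ∂P := by
              rw [← lintegral_indicator hsetmeas,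
                ← lintegral_const_mul' _ _ ENNReal.ofReal_ne_top]
              refine lintegral_congr (fun ω => ?_)
              simp only [hHdef]
              rw [hindeq ω]
      · have hempty : {ω | t ≤ B ω} = ∅ := by
          ext ω
          simp only [Set.mem_setOf_eq, Set.mem_empty_iff_false, iff_false, not_le, hB]
          rw [div_lt_iff₀ hq'pos]
          have h4 : min (fstar ω) (M:ℝ) ≤ M := min_le_right _ _
          push_neg at hsM
          nlinarith
        rw [hempty]
        simp
    -- assemble
    have hstep1 : ∫⁻ ω, ENNReal.ofReal (Theta Φ c (B ω)) ∂P ≤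
        ∫⁻ t in Set.Ioi 0, (∫⁻ ω, H t ω ∂P) := by
      rw [hlayer]
      exact lintegral_mono_ae ((ae_restrict_iff' measurableSet_Ioi).2 (ae_of_all _ hDoob))
    have hHunc : Function.uncurry H = fun p : ℝ × Ω =>
        ENNReal.ofReal (theta Φ φ c p.1 / (q' * p.1)) *
          (ENNReal.ofReal (f n p.2) * S.indicator 1 p) := by
      funext p
      cases p with
      | mk t ω => rfl
    have hHmeas : Measurable (Function.uncurry H) := by
      rw [hHunc]
      have h1 : Measurable fun p : ℝ × Ω => ENNReal.ofReal (theta Φ φ c p.1 / (q' * p.1)) :=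
        (kappa_measurable hconv hmono h0 hφ hq hc hqc).comp measurable_fst
      have h2 : Measurable fun p : ℝ × Ω => ENNReal.ofReal (f n p.2) :=
        ENNReal.measurable_ofReal.comp ((hfmeas n).comp measurable_snd)
      have h3 : Measurable (S.indicator (1 : ℝ × Ω → ℝ≥0∞)) := measurable_one.indicator hS
      exact h1.mul (h2.mul h3)
    have hswap : ∫⁻ t in Set.Ioi 0, (∫⁻ ω, H t ω ∂P) =
        ∫⁻ ω, (∫⁻ t in Set.Ioi 0, H t ω) ∂P :=
      lintegral_lintegral_swap hHmeas.aemeasurable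
    have hinner : ∀ ω, (∫⁻ t in Set.Ioi 0, H t ω) =
        ENNReal.ofReal (f n ω) *
          ∫⁻ t in Set.Ioc 0 (B ω), ENNReal.ofReal (theta Φ φ c t / (q' * t)) := by
      intro ω
      have h1 : ∀ t, H t ω = ENNReal.ofReal (f n ω) *
          ((Set.Iic (B ω)).indicator
            (fun t => ENNReal.ofReal (theta Φ φ c t / (q' * t))) t) := by
        intro t
        by_cases hmem : t ≤ B ω
        · simp only [hHdef]
          rw [Set.indicator_of_mem (show t ∈ Set.Iic (B ω) from hmem),
            Set.indicator_of_mem (show (t, ω) ∈ S from hmem)]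
          simp [mul_comm]
        · simp only [hHdef]
          rw [Set.indicator_of_notMem (show t ∉ Set.Iic (B ω) from hmem),
            Set.indicator_of_notMem (show (t, ω) ∉ S from hmem)]
          simp
      rw [lintegral_congr h1, lintegral_const_mul' _ _ ENNReal.ofReal_ne_top]
      congr 1
      rw [lintegral_indicator measurableSet_Iic, Measure.restrict_restrict measurableSet_Iic,
        Set.inter_comm, Set.Ioi_inter_Iic]
    have h1q : (0:ℝ) ≤ 1 - 1/q := by
      have : 1/q < 1 := by
        rw [div_lt_one hq0]
        exact hq
      linarith
    have hEfn : ∫⁻ ω, ENNReal.ofReal (Theta Φ c (f n ω)) ∂P ≤ 1 := by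
      refine le_trans (lintegral_mono (fun ω => ?_)) hone
      refine ENNReal.ofReal_le_ofReal ?_
      rw [Theta_eq (hfpos n ω)]
      exact max_le (by linarith) (Phi_nonneg hmono h0 (hfpos n ω))
    have hmeasfn : Measurable fun ω => ENNReal.ofReal ((1/q) * Theta Φ c (f n ω)) :=
      ENNReal.measurable_ofReal.comp ((hΘmeas.comp (hfmeas n)).const_mul _)
    have hmain : ∫⁻ ω, ENNReal.ofReal (Theta Φ c (B ω)) ∂P ≤
        ENNReal.ofReal (1/q) * (∫⁻ ω, ENNReal.ofReal (Theta Φ c (f n ω)) ∂P) +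
        ENNReal.ofReal (1 - 1/q) * (∫⁻ ω, ENNReal.ofReal (Theta Φ c (B ω)) ∂P) := by
      calc ∫⁻ ω, ENNReal.ofReal (Theta Φ c (B ω)) ∂P
          ≤ ∫⁻ t in Set.Ioi 0, (∫⁻ ω, H t ω ∂P) := hstep1
        _ = ∫⁻ ω, (∫⁻ t in Set.Ioi 0, H t ω) ∂P := hswap
        _ ≤ ∫⁻ ω, (ENNReal.ofReal ((1/q) * Theta Φ c (f n ω)) +
              ENNReal.ofReal ((1 - 1/q) * Theta Φ c (B ω))) ∂P := by
            refine lintegral_mono (fun ω => ?_)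
            rw [hinner ω]
            exact keyD_enn hconv hmono h0 hφ hq hc hqc (hfpos n ω) (hBnn ω)
        _ = (∫⁻ ω, ENNReal.ofReal ((1/q) * Theta Φ c (f n ω)) ∂P) +
            ∫⁻ ω, ENNReal.ofReal ((1 - 1/q) * Theta Φ c (B ω)) ∂P :=
            lintegral_add_left hmeasfn _
        _ = ENNReal.ofReal (1/q) * (∫⁻ ω, ENNReal.ofReal (Theta Φ c (f n ω)) ∂P) +
            ENNReal.ofReal (1 - 1/q) * (∫⁻ ω, ENNReal.ofReal (Theta Φ c (B ω)) ∂P) := by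
            congr 1
            · rw [← lintegral_const_mul' _ _ ENNReal.ofReal_ne_top]
              refine lintegral_congr fun ω => ?_
              rw [← ENNReal.ofReal_mul (by positivity)]
            · rw [← lintegral_const_mul' _ _ ENNReal.ofReal_ne_top]
              refine lintegral_congr fun ω => ?_
              rw [← ENNReal.ofReal_mul h1q]
    have hfinite : ∫⁻ ω, ENNReal.ofReal (Theta Φ c (B ω)) ∂P ≠ ⊤ := by
      have hb : ∀ ω, ENNReal.ofReal (Theta Φ c (B ω)) ≤
          ENNReal.ofReal (Theta Φ c ((M:ℝ)/q')) := by
        intro ω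
        refine ENNReal.ofReal_le_ofReal (hΘmono ?_)
        rw [hB]
        simp only
        exact (div_le_div_iff_of_pos_right hq'pos).2 (min_le_right _ _)
      refine ne_of_lt (lt_of_le_of_lt (lintegral_mono hb) ?_)
      rw [lintegral_const, measure_univ, mul_one]
      exact ENNReal.ofReal_lt_top
    have habs : ∫⁻ ω, ENNReal.ofReal (Theta Φ c (B ω)) ∂P ≤
        ENNReal.ofReal (1/q) + ENNReal.ofReal (1 - 1/q) *
          (∫⁻ ω, ENNReal.ofReal (Theta Φ c (B ω)) ∂P) := by
      refine le_trans hmain ?_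
      gcongr
      calc ENNReal.ofReal (1/q) * (∫⁻ ω, ENNReal.ofReal (Theta Φ c (f n ω)) ∂P)
          ≤ ENNReal.ofReal (1/q) * 1 := mul_le_mul_right hEfn _
        _ = ENNReal.ofReal (1/q) := mul_one _
    set x := ∫⁻ ω, ENNReal.ofReal (Theta Φ c (B ω)) ∂P with hxdef
    have hrhsfin : ENNReal.ofReal (1/q) + ENNReal.ofReal (1 - 1/q) * x ≠ ⊤ :=
      ENNReal.add_ne_top.2 ⟨ENNReal.ofReal_ne_top, ENNReal.mul_ne_top ENNReal.ofReal_ne_top hfinite⟩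
    have hr := ENNReal.toReal_mono hrhsfin habs
    rw [ENNReal.toReal_add ENNReal.ofReal_ne_top
        (ENNReal.mul_ne_top ENNReal.ofReal_ne_top hfinite),
      ENNReal.toReal_mul, ENNReal.toReal_ofReal (by positivity),
      ENNReal.toReal_ofReal h1q] at hr
    have hq2 : (0:ℝ) < 1/q := by positivity
    have h2 : (1/q) * x.toReal ≤ (1/q) * 1 := by nlinarith [hr]
    have hxr : x.toReal ≤ 1 := le_of_mul_le_mul_left h2 hq2
    calc x = ENNReal.ofReal x.toReal := (ENNReal.ofReal_toReal hfinite).symm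
      _ ≤ ENNReal.ofReal 1 := ENNReal.ofReal_le_ofReal hxr
      _ = 1 := ENNReal.ofReal_one
  -- monotone convergence in M
  have hMCT : ∫⁻ ω, ENNReal.ofReal (Theta Φ c (fstar ω / q')) ∂P ≤ 1 := by
    have hptsup : ∀ ω, ENNReal.ofReal (Theta Φ c (fstar ω / q')) =
        ⨆ M : ℕ, ENNReal.ofReal (Theta Φ c (min (fstar ω) M / q')) := by
      intro ω
      refine le_antisymm ?_ ?_
      · refine le_trans ?_ (le_iSup _ (Nat.ceil (fstar ω)))
        rw [min_eq_left (Nat.le_ceil _)]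
      · refine iSup_le (fun M => ?_)
        refine ENNReal.ofReal_le_ofReal (hΘmono ?_)
        exact (div_le_div_iff_of_pos_right hq'pos).2 (min_le_left _ _)
    have hmeasM : ∀ M : ℕ, AEMeasurable
        (fun ω => ENNReal.ofReal (Theta Φ c (min (fstar ω) M / q'))) P := fun M =>
      (ENNReal.measurable_ofReal.comp
        (hΘmeas.comp ((hfstar_meas.min measurable_const).div_const q'))).aemeasurable
    have hmonM : ∀ᵐ ω ∂P, Monotone
        fun M : ℕ => ENNReal.ofReal (Theta Φ c (min (fstar ω) M / q')) := by
      refine ae_of_all _ (fun ω M N hMN => ?_)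
      refine ENNReal.ofReal_le_ofReal (hΘmono ?_)
      refine (div_le_div_iff_of_pos_right hq'pos).2 (min_le_min le_rfl ?_)
      exact_mod_cast hMN
    calc ∫⁻ ω, ENNReal.ofReal (Theta Φ c (fstar ω / q')) ∂P
        = ∫⁻ ω, ⨆ M : ℕ, ENNReal.ofReal (Theta Φ c (min (fstar ω) M / q')) ∂P :=
          lintegral_congr hptsup
      _ = ⨆ M : ℕ, ∫⁻ ω, ENNReal.ofReal (Theta Φ c (min (fstar ω) M / q')) ∂P :=
          lintegral_iSup' hmeasM hmonM
      _ ≤ 1 := iSup_le hMbound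
  -- conclude via convexity
  have hc1 : (0:ℝ) < 1 + c := by linarith
  have hpt : ∀ ω, Φ (fstar ω / (q' * (1 + c))) ≤
      (Theta Φ c (fstar ω / q') + c) / (1 + c) := by
    intro ω
    set y := fstar ω / q' with hy
    have hy0 : 0 ≤ y := div_nonneg (hfstar_nonneg ω) hq'pos.le
    have heq : fstar ω / (q' * (1 + c)) = (1/(1+c)) * y + (c/(1+c)) * 0 := by
      rw [hy]
      field_simp
      ring
    have hcvx := hconv.2 (Set.mem_Ici.2 hy0) (Set.mem_Ici.2 le_rfl)
      (by positivity : (0:ℝ) ≤ 1/(1+c)) (by positivity : (0:ℝ) ≤ c/(1+c))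
      (by field_simp : 1/(1+c) + c/(1+c) = 1)
    rw [heq]
    have h5 : Φ y ≤ Theta Φ c y + c := by
      rw [Theta_eq hy0]
      have h6 := le_max_left (Φ y - c) 0
      linarith
    calc Φ ((1/(1+c)) * y + (c/(1+c)) * 0)
        = Φ ((1/(1+c)) • y + (c/(1+c)) • (0:ℝ)) := by norm_num
      _ ≤ (1/(1+c)) * Φ y + (c/(1+c)) * Φ 0 := hcvx
      _ = Φ y / (1+c) := by rw [h0]; ring
      _ ≤ (Theta Φ c y + c) / (1+c) := (div_le_div_iff_of_pos_right hc1).2 h5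
  calc ∫⁻ ω, ENNReal.ofReal (Φ (fstar ω / (q' * (1 + c)))) ∂P
      ≤ ∫⁻ ω, ENNReal.ofReal ((Theta Φ c (fstar ω / q') + c) / (1 + c)) ∂P :=
        lintegral_mono fun ω => ENNReal.ofReal_le_ofReal (hpt ω)
    _ = ENNReal.ofReal (1/(1+c)) *
        ∫⁻ ω, ENNReal.ofReal (Theta Φ c (fstar ω / q') + c) ∂P := by
        rw [← lintegral_const_mul' _ _ ENNReal.ofReal_ne_top]
        refine lintegral_congr fun ω => ?_
        rw [← ENNReal.ofReal_mul (by positivity)]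
        congr 1
        field_simp
    _ = ENNReal.ofReal (1/(1+c)) *
        ((∫⁻ ω, ENNReal.ofReal (Theta Φ c (fstar ω / q')) ∂P) + ENNReal.ofReal c) := by
        congr 1
        have h7 : ∀ ω, ENNReal.ofReal (Theta Φ c (fstar ω / q') + c) =
            ENNReal.ofReal (Theta Φ c (fstar ω / q')) + ENNReal.ofReal c := fun ω =>
          ENNReal.ofReal_add (Theta_nonneg _) hc
        rw [lintegral_congr h7, lintegral_add_right _ measurable_const, lintegral_const,
          measure_univ, mul_one]
    _ ≤ ENNReal.ofReal (1/(1+c)) * (1 + ENNReal.ofReal c) := by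
        gcongr
    _ = 1 := by
        rw [← ENNReal.ofReal_one, ← ENNReal.ofReal_add zero_le_one hc,
          ← ENNReal.ofReal_mul (by positivity)]
        rw [show (1/(1+c)) * ((1:ℝ) + c) = 1 by field_simp]

end core

/-- Under the hypotheses of Statement 7 (a Young function `Φ` with right
derivative `φ` satisfying `Φ(λ) ≤ (1/q)·λ·φ(λ) + c`, `q' := q/(q-1)`), for every nonnegative
submartingale `(f_k)` and every `n`, the Luxemburg norms (with `inf ∅ = ∞`) satisfy
`‖max_{k ≤ n} f_k‖_Φ ≤ q'·(1+c)·‖f_n‖_Φ`. -/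
theorem stmt8 {Ω : Type*} {m0 : MeasurableSpace Ω} (P : Measure Ω)
    [IsProbabilityMeasure P] (ℱ : Filtration ℕ m0)
    (f : ℕ → Ω → ℝ) (hf : Submartingale f ℱ P) (hfpos : ∀ k ω, 0 ≤ f k ω)
    (Φ φ : ℝ → ℝ)
    (hconv : ConvexOn ℝ (Set.Ici (0:ℝ)) Φ)
    (hmono : MonotoneOn Φ (Set.Ici (0:ℝ)))
    (h0 : Φ 0 = 0)
    (hpos : ∃ x₁ > (0:ℝ), 0 < Φ x₁)
    (hφ : ∀ x ≥ (0:ℝ), HasDerivWithinAt Φ (φ x) (Set.Ici x) x)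
    (q c : ℝ) (hq : 1 < q) (hc : 0 ≤ c)
    (hqc : ∀ lam ≥ (0:ℝ), Φ lam ≤ (1 / q) * lam * φ lam + c)
    (n : ℕ) :
    sInf {l : ℝ≥0∞ | ∃ lam : ℝ, 0 < lam ∧ l = ENNReal.ofReal lam ∧
        ∫⁻ ω, ENNReal.ofReal
          (Φ (((Finset.range (n + 1)).sup' Finset.nonempty_range_add_one fun k => f k ω) / lam)) ∂P ≤ 1}
      ≤ ENNReal.ofReal (q / (q - 1) * (1 + c)) *
        sInf {l : ℝ≥0∞ | ∃ lam : ℝ, 0 < lam ∧ l = ENNReal.ofReal lam ∧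
          ∫⁻ ω, ENNReal.ofReal (Φ (f n ω / lam)) ∂P ≤ 1} := by
  have hq1 : (0:ℝ) < q - 1 := by linarith
  have hc1 : (0:ℝ) < 1 + c := by linarith
  have hKpos : (0:ℝ) < q / (q - 1) * (1 + c) := by positivity
  set K : ℝ := q / (q - 1) * (1 + c) with hK
  set LHSset := {l : ℝ≥0∞ | ∃ lam : ℝ, 0 < lam ∧ l = ENNReal.ofReal lam ∧
      ∫⁻ ω, ENNReal.ofReal
        (Φ (((Finset.range (n + 1)).sup' Finset.nonempty_range_add_one fun k => f k ω) / lam)) ∂P ≤ 1}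
    with hLHS
  set Sn := {l : ℝ≥0∞ | ∃ lam : ℝ, 0 < lam ∧ l = ENNReal.ofReal lam ∧
      ∫⁻ ω, ENNReal.ofReal (Φ (f n ω / lam)) ∂P ≤ 1} with hSn
  have hmem : ∀ l ∈ Sn, sInf LHSset ≤ ENNReal.ofReal K * l := by
    rintro l ⟨lam, hlam, rfl, hint⟩
    have hg : Submartingale (lam⁻¹ • f) ℱ P := hf.smul_nonneg (by positivity)
    have hgpos : ∀ k ω, 0 ≤ (lam⁻¹ • f) k ω := fun k ω =>
      mul_nonneg (by positivity) (hfpos k ω)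
    have hone : ∫⁻ ω, ENNReal.ofReal (Φ ((lam⁻¹ • f) n ω)) ∂P ≤ 1 := by
      refine le_trans (le_of_eq (lintegral_congr fun ω => ?_)) hint
      rw [Pi.smul_apply, Pi.smul_apply, smul_eq_mul, div_eq_inv_mul]
    have hcore := core P ℱ (lam⁻¹ • f) hg hgpos hconv hmono h0 hφ hq hc hqc n hone
    have hsup : ∀ ω, ((Finset.range (n + 1)).sup' Finset.nonempty_range_add_one
        fun k => (lam⁻¹ • f) k ω)
        = lam⁻¹ * ((Finset.range (n + 1)).sup' Finset.nonempty_range_add_one fun k => f k ω) := by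
      intro ω
      rw [Finset.comp_sup'_eq_sup'_comp Finset.nonempty_range_add_one
        (f := fun k => f k ω) (fun x : ℝ => lam⁻¹ * x)
        (fun x y => mul_max_of_nonneg x y (by positivity : (0:ℝ) ≤ lam⁻¹))]
      rfl
    have hfinal : ∫⁻ ω, ENNReal.ofReal
        (Φ (((Finset.range (n + 1)).sup' Finset.nonempty_range_add_one fun k => f k ω)
          / (K * lam))) ∂P ≤ 1 := by
      refine le_trans (le_of_eq (lintegral_congr fun ω => ?_)) hcore
      congr 2
      rw [hsup ω, hK, div_mul_eq_div_div_swap, inv_mul_eq_div]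
    have hmem2 : ENNReal.ofReal (K * lam) ∈ LHSset :=
      ⟨K * lam, by positivity, rfl, hfinal⟩
    calc sInf LHSset ≤ ENNReal.ofReal (K * lam) := sInf_le hmem2
      _ = ENNReal.ofReal K * ENNReal.ofReal lam := ENNReal.ofReal_mul hKpos.le
  have hKne0 : ENNReal.ofReal K ≠ 0 := by
    simp only [ne_eq, ENNReal.ofReal_eq_zero, not_le]
    exact hKpos
  conv_rhs => rw [sInf_eq_iInf', ENNReal.mul_iInf_of_ne hKne0 ENNReal.ofReal_ne_top]
  exact le_iInf fun l => hmem l l.2
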